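/- arXiv:2401.14298 — 2 statements merged into one kernel-verified Lean document; each statement's English description precedes it below -/
import Mathlib

section
/- For every κ ∈ {p, up} and every n ∈ ℕ, n ≥ 1, the image G_{κ,p^n} = π_n(SO(2)_{p,κ}) of SO(2)_{p,κ} under entrywise reduction modulo p^n is a finite group of order exactly 2·p^n. -/
open scoped Matrix

/-- Reduction of a `p`-adic number in `ℤ_p` modulo `p^n` (junk value `0` outside `ℤ_p`). -/
noncomputable def redQ (p : ℕ) [Fact p.Prime] (n : ℕ) (x : ℚ_[p]) : ZMod (p ^ n) :=
  if h : ‖x‖ ≤ 1 then PadicInt.toZModPow n (⟨x, h⟩ : ℤ_[p]) else 0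

/-- Entrywise reduction modulo `p^n` of a square matrix over `ℚ_p` with entries in `ℤ_p`. -/
noncomputable def matRed (p : ℕ) [Fact p.Prime] (n d : ℕ)
    (L : Matrix (Fin d) (Fin d) ℚ_[p]) : Matrix (Fin d) (Fin d) (ZMod (p ^ n)) :=
  L.map (redQ p n)

/-- The special orthogonal group of the binary quadratic form with matrix
`diag(a, b)` over `ℚ_p`. -/
def SO2set (p : ℕ) [Fact p.Prime] (a b : ℚ_[p]) : Set (Matrix (Fin 2) (Fin 2) ℚ_[p]) :=
  {L | L.transpose * Matrix.diagonal ![a, b] * L = Matrix.diagonal ![a, b] ∧ L.det = 1}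


section helpers

variable {p : ℕ} [Fact p.Prime]

lemma norm_two_eq_one (hp2 : 2 < p) : ‖(2 : ℤ_[p])‖ = 1 := by
  have h1 : ‖(2 : ℤ_[p])‖ ≤ 1 := PadicInt.norm_le_one _
  have h2 : ¬ ‖((2 : ℤ) : ℤ_[p])‖ < 1 := by
    rw [PadicInt.norm_int_lt_one_iff_dvd]
    intro hd
    have := Int.le_of_dvd (by norm_num) hd
    omega
  push_cast at h2
  exact le_antisymm h1 (not_lt.mp h2)

lemma sqrt1 (hp2 : 2 < p) (w : ℤ_[p]) (h : ‖w - 1‖ < 1) :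
    ∃ c : ℤ_[p], c ^ 2 = w ∧ ‖c - 1‖ < 1 := by
  set F : Polynomial ℤ_[p] := Polynomial.X ^ 2 - Polynomial.C w with hF
  have hder : F.derivative = Polynomial.C 2 * Polynomial.X := by
    simp [hF]
    rw [one_add_one_eq_two]
    exact (map_ofNat Polynomial.C 2).symm
  have hevald : F.derivative.eval 1 = 2 := by simp [hder]
  have heval : F.eval 1 = 1 - w := by simp [hF]
  have hnorm : ‖F.eval 1‖ < ‖F.derivative.eval 1‖ ^ 2 := by
    rw [heval, hevald, norm_two_eq_one hp2]
    simpa [norm_sub_rev] using h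
  obtain ⟨z, hz, hz1, -, -⟩ := hensels_lemma hnorm
  refine ⟨z, ?_, ?_⟩
  · exact sub_eq_zero.mp (by simpa [hF] using hz)
  · rwa [Polynomial.coe_aeval_eq_eval, hevald, norm_two_eq_one hp2] at hz1

open PadicInt in
lemma tz_eq_iff (n : ℕ) (x y : ℤ_[p]) :
    toZModPow n x = toZModPow n y ↔ ((p : ℤ_[p]) ^ n) ∣ x - y := by
  rw [← sub_eq_zero, ← map_sub, ← RingHom.mem_ker, ker_toZModPow,
    Ideal.mem_span_singleton]

lemma key (hp2 : 2 < p) (n : ℕ) (a b c c' s s' : ℤ_[p]) (hab : a * b = 1)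
    (h : a * c ^ 2 + p * s ^ 2 = a) (h' : a * c' ^ 2 + p * s' ^ 2 = a)
    (hss : ((p : ℤ_[p]) ^ n) ∣ s - s') (hcc : (p : ℤ_[p]) ∣ c - c')
    (hc' : ‖c'‖ = 1) : ((p : ℤ_[p]) ^ n) ∣ c - c' := by
  have hss' : ((p : ℤ_[p]) ^ n) ∣ s' - s := (dvd_sub_comm).mp hss
  have hmul : ((p : ℤ_[p]) ^ (n + 1)) ∣ (c - c') * (c + c') := by
    have h1 : ((p : ℤ_[p]) ^ (n + 1)) ∣ a * ((c - c') * (c + c')) := by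
      have he : a * ((c - c') * (c + c')) = (p : ℤ_[p]) * ((s' - s) * (s' + s)) := by
        linear_combination h - h'
      rw [he, pow_succ, mul_comm ((p : ℤ_[p]) ^ n)]
      exact mul_dvd_mul_left _ (Dvd.dvd.mul_right hss' _)
    have he2 : (c - c') * (c + c') = b * (a * ((c - c') * (c + c'))) := by
      linear_combination (-((c - c') * (c + c'))) * hab
    rw [he2]
    exact Dvd.dvd.mul_left h1 b
  have hlt : ‖c - c'‖ < 1 := (PadicInt.norm_lt_one_iff_dvd _).mpr hcc
  have hunit : IsUnit (c + c') := by
    rw [PadicInt.isUnit_iff]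
    have hne : ‖(2 : ℤ_[p]) * c'‖ ≠ ‖c - c'‖ := by
      rw [norm_mul, norm_two_eq_one hp2, one_mul, hc']
      linarith
    have he : c + c' = 2 * c' + (c - c') := by ring
    rw [he, PadicInt.norm_add_eq_max_of_ne hne, norm_mul,
      norm_two_eq_one hp2, one_mul, hc']
    exact sup_eq_left.mpr hlt.le
  exact dvd_trans (pow_dvd_pow _ (Nat.le_succ n)) ((hunit.dvd_mul_right).mp hmul)

lemma norms (a x z : ℚ_[p]) (ha : ‖a‖ = 1) (heq : a * x ^ 2 + p * z ^ 2 = a) :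
    ‖x‖ = 1 ∧ ‖z‖ ≤ 1 := by
  have hp1 : (1 : ℝ) < p := by exact_mod_cast (Fact.out : p.Prime).one_lt
  have hp0 : (0 : ℝ) < p := lt_trans one_pos hp1
  have ha0 : a ≠ 0 := by intro h; rw [h] at ha; simp at ha
  by_cases hz : z = 0
  · subst hz
    have hx2 : x ^ 2 = 1 := by
      have h2 : a * x ^ 2 = a * 1 := by linear_combination heq
      exact mul_left_cancel₀ ha0 h2
    have : ‖x‖ ^ 2 = 1 := by rw [← norm_pow, hx2, norm_one]
    constructor
    · nlinarith [norm_nonneg x]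
    · simp
  · have hvz : ‖(p : ℚ_[p]) * z ^ 2‖ = (p : ℝ) ^ (-(1 + 2 * z.valuation)) := by
      rw [norm_mul, norm_pow, Padic.norm_p, Padic.norm_eq_zpow_neg_valuation hz]
      rw [← zpow_natCast ((p:ℝ) ^ (-z.valuation)) 2, ← zpow_mul, ← zpow_neg_one,
        ← zpow_add₀ (ne_of_gt hp0)]
      ring_nf
    by_cases hx : x = 0
    · exfalso
      rw [hx] at heq
      have h1 : ‖(p : ℚ_[p]) * z ^ 2‖ = 1 := by
        rw [show (p : ℚ_[p]) * z ^ 2 = a by linear_combination heq, ha]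
      rw [hvz, show (1:ℝ) = (p:ℝ) ^ (0:ℤ) by simp] at h1
      have := zpow_right_injective₀ hp0 (ne_of_gt hp1) h1
      omega
    · have hvx : ‖a * x ^ 2‖ = (p : ℝ) ^ (-(2 * x.valuation)) := by
        rw [norm_mul, norm_pow, ha, one_mul, Padic.norm_eq_zpow_neg_valuation hx]
        rw [← zpow_natCast ((p:ℝ) ^ (-x.valuation)) 2, ← zpow_mul]
        ring_nf
      have hne : ‖a * x ^ 2‖ ≠ ‖(p : ℚ_[p]) * z ^ 2‖ := by
        rw [hvx, hvz]
        intro h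
        have := zpow_right_injective₀ hp0 (ne_of_gt hp1) h
        omega
      have hmax : max ‖a * x ^ 2‖ ‖(p : ℚ_[p]) * z ^ 2‖ = 1 := by
        rw [← Padic.add_eq_max_of_ne hne, heq, ha]
      have hzle : ‖z‖ ≤ 1 := by
        have h2 : ‖(p : ℚ_[p]) * z ^ 2‖ ≤ 1 := le_of_le_of_eq (le_max_right _ _) hmax
        rw [hvz, show (1:ℝ) = (p:ℝ) ^ (0:ℤ) by simp,
          zpow_le_zpow_iff_right₀ hp1] at h2
        rw [Padic.norm_eq_zpow_neg_valuation hz, show (1:ℝ) = (p:ℝ) ^ (0:ℤ) by simp,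
          zpow_le_zpow_iff_right₀ hp1]
        omega
      refine ⟨?_, hzle⟩
      rcases max_choice ‖a * x ^ 2‖ ‖(p : ℚ_[p]) * z ^ 2‖ with h | h <;> rw [h] at hmax
      · rw [hvx, show (1:ℝ) = (p:ℝ) ^ (0:ℤ) by simp] at hmax
        have := zpow_right_injective₀ hp0 (ne_of_gt hp1) hmax
        rw [Padic.norm_eq_zpow_neg_valuation hx, show (1:ℝ) = (p:ℝ) ^ (0:ℤ) by simp]
        congr 1
        omega
      · exfalso
        rw [hvz, show (1:ℝ) = (p:ℝ) ^ (0:ℤ) by simp] at hmax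
        have := zpow_right_injective₀ hp0 (ne_of_gt hp1) hmax
        omega


lemma param (a b : ℤ_[p]) (hab : a * b = 1) (L : Matrix (Fin 2) (Fin 2) ℚ_[p]) :
    L ∈ SO2set p (a : ℚ_[p]) ((p : ℕ) : ℚ_[p]) ↔
    ∃ c s : ℤ_[p], a * c ^ 2 + (p : ℤ_[p]) * s ^ 2 = a ∧
      L = !![((c : ℚ_[p])), ((-((p : ℤ_[p]) * b * s) : ℤ_[p]) : ℚ_[p]);
             ((s : ℚ_[p])), ((c : ℚ_[p]))] := by
  have haq : ‖(a : ℚ_[p])‖ = 1 := by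
    rw [← PadicInt.norm_def]
    exact PadicInt.isUnit_iff.mp (IsUnit.of_mul_eq_one b hab)
  have ha0 : (a : ℚ_[p]) ≠ 0 := by intro h; rw [h] at haq; simp at haq
  have habq : (a : ℚ_[p]) * (b : ℚ_[p]) = 1 := by exact_mod_cast congrArg _ hab
  constructor
  · rintro ⟨hA, hdet⟩
    have h00 := congr_fun (congr_fun hA 0) 0
    have h01 := congr_fun (congr_fun hA 0) 1
    simp [Matrix.mul_apply, Fin.sum_univ_two, Matrix.diagonal] at h00 h01
    rw [Matrix.det_fin_two] at hdet
    set x := L 0 0 with hx; set y := L 0 1 with hy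
    set z := L 1 0 with hz; set w := L 1 1 with hw
    have e00 : (a : ℚ_[p]) * x ^ 2 + (p : ℚ_[p]) * z ^ 2 = a := by linear_combination h00
    have e01 : (a : ℚ_[p]) * x * y + (p : ℚ_[p]) * z * w = 0 := by linear_combination h01
    obtain ⟨hx1, hz1⟩ := norms (a : ℚ_[p]) x z haq e00
    have hx0 : x ≠ 0 := by intro h; rw [h] at hx1; simp at hx1
    have hwx : w = x := by
      have h2 : (a : ℚ_[p]) * w = (a : ℚ_[p]) * x := by
        linear_combination ((a : ℚ_[p]) * x) * hdet - w * e00 + z * e01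
      exact mul_left_cancel₀ ha0 h2
    have hyv : y = -((p : ℚ_[p]) * (b : ℚ_[p]) * z) := by
      have h2 : x * ((a : ℚ_[p]) * y) = x * (-((p : ℚ_[p]) * z)) := by
        rw [hwx] at e01; linear_combination e01
      have h3 : (a : ℚ_[p]) * y = -((p : ℚ_[p]) * z) := mul_left_cancel₀ hx0 h2
      calc y = (b : ℚ_[p]) * ((a : ℚ_[p]) * y) := by
              linear_combination (-y) * habq
        _ = -((p : ℚ_[p]) * (b : ℚ_[p]) * z) := by rw [h3]; ring
    set c : ℤ_[p] := ⟨x, hx1.le⟩ with hc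
    set s : ℤ_[p] := ⟨z, hz1⟩ with hs
    have hcx : (c : ℚ_[p]) = x := rfl
    have hsz : (s : ℚ_[p]) = z := rfl
    refine ⟨c, s, ?_, ?_⟩
    · have h4 : ((a * c ^ 2 + (p : ℤ_[p]) * s ^ 2 : ℤ_[p]) : ℚ_[p]) = ((a : ℤ_[p]) : ℚ_[p]) := by
        push_cast
        exact e00
      exact Subtype.coe_injective h4
    · have hyc : ((-((p : ℤ_[p]) * b * s) : ℤ_[p]) : ℚ_[p]) = y := by
        rw [hyv]
        push_cast
        rfl
      rw [hcx, hsz, hyc, Matrix.eta_fin_two L, ← hx, ← hy, ← hz, ← hw, hwx]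
  · rintro ⟨c, s, heq, rfl⟩
    have heqq : (a : ℚ_[p]) * (c : ℚ_[p]) ^ 2 + (p : ℚ_[p]) * (s : ℚ_[p]) ^ 2 = (a : ℚ_[p]) := by
      exact_mod_cast congrArg (fun t : ℤ_[p] => (t : ℚ_[p])) heq
    have hcast : ((-((p : ℤ_[p]) * b * s) : ℤ_[p]) : ℚ_[p])
        = -((p : ℚ_[p]) * (b : ℚ_[p]) * (s : ℚ_[p])) := by push_cast; ring
    constructor
    · rw [hcast]
      ext i j
      fin_cases i <;> fin_cases j <;>
        simp [Matrix.mul_apply, Fin.sum_univ_two, Matrix.diagonal, Matrix.vecHead,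
          Matrix.vecTail]
      · linear_combination heqq
      · linear_combination (-((c:ℚ_[p])*(p:ℚ_[p])*(s:ℚ_[p]))) * habq
      · linear_combination (-((c:ℚ_[p])*(p:ℚ_[p])*(s:ℚ_[p]))) * habq
      · linear_combination (p:ℚ_[p])*(b:ℚ_[p])*heqq
          + ((p:ℚ_[p])^2*(b:ℚ_[p])*(s:ℚ_[p])^2 - (p:ℚ_[p])*(c:ℚ_[p])^2 + (p:ℚ_[p]))*habq
    · rw [hcast, Matrix.det_fin_two]
      simp [Matrix.vecHead, Matrix.vecTail]
      linear_combination (b:ℚ_[p])*heqq + (1 - (c:ℚ_[p])^2)*habq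

open PadicInt in
lemma redQ_coe (n : ℕ) (z : ℤ_[p]) : redQ p n (z : ℚ_[p]) = toZModPow n z := by
  rw [redQ, dif_pos z.2]
  rfl

open PadicInt in
lemma matRed_mat (n : ℕ) (c y s : ℤ_[p]) :
    matRed p n 2 (!![((c : ℚ_[p])), ((y : ℚ_[p])); ((s : ℚ_[p])), ((c : ℚ_[p]))]) =
    !![toZModPow n c, toZModPow n y; toZModPow n s, toZModPow n c] := by
  ext i j
  fin_cases i <;> fin_cases j <;>
    simp [matRed, Matrix.map_apply, redQ_coe, Matrix.vecHead, Matrix.vecTail]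

open PadicInt in
lemma main_count (hp2 : 2 < p) (a b : ℤ_[p]) (hab : a * b = 1) (n : ℕ) (hn : 1 ≤ n) :
    (matRed p n 2 '' SO2set p (a : ℚ_[p]) ((p : ℕ) : ℚ_[p])).ncard = 2 * p ^ n := by
  haveI : NeZero (p ^ n) := ⟨pow_ne_zero n (Fact.out : p.Prime).pos.ne'⟩
  set sOf : ZMod (p ^ n) → ℤ_[p] := fun t => ((t.val : ℕ) : ℤ_[p]) with hsOfdef
  have hsOf : ∀ t, toZModPow n (sOf t) = t := fun t => by
    rw [hsOfdef]; simp only [map_natCast]; exact ZMod.natCast_zmod_val t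
  have hex : ∀ t : ZMod (p ^ n), ∃ c : ℤ_[p],
      c ^ 2 = 1 - (p : ℤ_[p]) * b * (sOf t) ^ 2 ∧ ‖c - 1‖ < 1 := by
    intro t
    apply sqrt1 hp2
    have he : (1 - (p : ℤ_[p]) * b * (sOf t) ^ 2) - 1
        = (p : ℤ_[p]) * (-(b * (sOf t) ^ 2)) := by ring
    rw [he, norm_mul, PadicInt.norm_p]
    have h1 : ‖(-(b * (sOf t) ^ 2) : ℤ_[p])‖ ≤ 1 := PadicInt.norm_le_one _
    have h0 : (0 : ℝ) ≤ ‖(-(b * (sOf t) ^ 2) : ℤ_[p])‖ := norm_nonneg _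
    have hp0 : (0 : ℝ) < (p : ℝ)⁻¹ := by
      rw [inv_pos]
      exact_mod_cast lt_trans two_pos hp2
    have hpinv : (p : ℝ)⁻¹ < 1 := by
      rw [inv_lt_one_iff₀]
      right
      exact_mod_cast lt_trans one_lt_two hp2
    nlinarith
  choose cOf hc2 hc1 using hex
  have hcnorm : ∀ t, ‖cOf t‖ = 1 := by
    intro t
    have hne : ‖(1 : ℤ_[p])‖ ≠ ‖cOf t - 1‖ := by
      rw [norm_one]; exact fun h => absurd (h ▸ hc1 t) (lt_irrefl _)
    have he : cOf t = 1 + (cOf t - 1) := by ring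
    rw [he, PadicInt.norm_add_eq_max_of_ne hne, norm_one]
    exact sup_eq_left.mpr (hc1 t).le
  have hceq : ∀ (e : ℤ_[p]) (t : ZMod (p ^ n)), e = 1 ∨ e = -1 →
      a * (e * cOf t) ^ 2 + (p : ℤ_[p]) * (sOf t) ^ 2 = a := by
    intro e t he
    have he2 : e ^ 2 = 1 := by rcases he with rfl | rfl <;> ring
    have h3 := hc2 t
    linear_combination a * (cOf t) ^ 2 * he2 + a * h3 - ((p : ℤ_[p]) * (sOf t) ^ 2) * hab
  set sg : Bool → ℤ_[p] := fun e => if e then 1 else -1 with hsg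
  have hsgt : sg true = 1 := rfl
  have hsgf : sg false = -1 := rfl
  have hsgor : ∀ e, sg e = 1 ∨ sg e = -1 := by
    intro e; cases e
    · right; exact hsgf
    · left; exact hsgt
  set g : Bool × ZMod (p ^ n) → Matrix (Fin 2) (Fin 2) (ZMod (p ^ n)) := fun et =>
    !![toZModPow n (sg et.1 * cOf et.2), toZModPow n (-((p : ℤ_[p]) * b * sOf et.2));
       toZModPow n (sOf et.2), toZModPow n (sg et.1 * cOf et.2)] with hg
  have hgapp : ∀ (e : Bool) (t : ZMod (p ^ n)), g (e, t) =
      !![toZModPow n (sg e * cOf t), toZModPow n (-((p : ℤ_[p]) * b * sOf t));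
         toZModPow n (sOf t), toZModPow n (sg e * cOf t)] := fun _ _ => rfl
  have himg : matRed p n 2 '' SO2set p (a : ℚ_[p]) ((p : ℕ) : ℚ_[p]) = Set.range g := by
    ext M
    constructor
    · rintro ⟨L, hL, rfl⟩
      obtain ⟨c, s, heq, rfl⟩ := (param a b hab L).mp hL
      rw [matRed_mat]
      have hst : ((p : ℤ_[p]) ^ n) ∣ s - sOf (toZModPow n s) := by
        rw [← tz_eq_iff]
        exact (hsOf (toZModPow n s)).symm
      have hct1 : (p : ℤ_[p]) ∣ cOf (toZModPow n s) - 1 :=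
        (PadicInt.norm_lt_one_iff_dvd _).mp (hc1 _)
      have hcsq : (p : ℤ_[p]) ∣ (c - 1) * (c + 1) := by
        have he : (c - 1) * (c + 1) = (p : ℤ_[p]) * (-(b * s ^ 2)) := by
          linear_combination b * heq + (1 - c ^ 2) * hab
        exact Dvd.intro _ he.symm
      have hy01 : toZModPow n (-((p : ℤ_[p]) * b * sOf (toZModPow n s)))
          = toZModPow n (-((p : ℤ_[p]) * b * s)) := by
        rw [tz_eq_iff]
        have he : -((p : ℤ_[p]) * b * sOf (toZModPow n s)) - -((p : ℤ_[p]) * b * s)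
            = ((p : ℤ_[p]) * b) * (s - sOf (toZModPow n s)) := by ring
        rw [he]
        exact Dvd.dvd.mul_left hst _
      rcases (PadicInt.prime_p.2.2 _ _ hcsq) with h | h
      · refine ⟨(true, toZModPow n s), ?_⟩
        rw [hgapp, hsgt, one_mul]
        have hcc : toZModPow n (cOf (toZModPow n s)) = toZModPow n c := by
          rw [tz_eq_iff]
          rw [dvd_sub_comm]
          refine key hp2 n a b c (cOf (toZModPow n s)) s (sOf (toZModPow n s)) hab heq
            ?_ hst ?_ (hcnorm _)
          · have h5 := hceq 1 (toZModPow n s) (Or.inl rfl)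
            rwa [one_mul] at h5
          · have he : c - cOf (toZModPow n s) = (c - 1) - (cOf (toZModPow n s) - 1) := by ring
            rw [he]
            exact dvd_sub h hct1
        rw [hcc, hy01, hsOf]
      · refine ⟨(false, toZModPow n s), ?_⟩
        rw [hgapp, hsgf, neg_one_mul]
        have hcc : toZModPow n (-cOf (toZModPow n s)) = toZModPow n c := by
          rw [tz_eq_iff]
          rw [dvd_sub_comm]
          refine key hp2 n a b c (-cOf (toZModPow n s)) s (sOf (toZModPow n s)) hab heq
            ?_ hst ?_ (by rw [norm_neg]; exact hcnorm _)
          · have h5 := hceq (-1) (toZModPow n s) (Or.inr rfl)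
            rwa [show ((-1 : ℤ_[p]) * cOf (toZModPow n s)) = -cOf (toZModPow n s) by ring] at h5
          · have he : c - -cOf (toZModPow n s) = (c + 1) + (cOf (toZModPow n s) - 1) := by ring
            rw [he]
            exact dvd_add h hct1
        rw [hcc, hy01, hsOf]
    · rintro ⟨⟨e, t⟩, rfl⟩
      refine ⟨!![((sg e * cOf t : ℤ_[p]) : ℚ_[p]), ((-((p : ℤ_[p]) * b * sOf t) : ℤ_[p]) : ℚ_[p]);
          ((sOf t : ℤ_[p]) : ℚ_[p]), ((sg e * cOf t : ℤ_[p]) : ℚ_[p])], ?_, ?_⟩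
      · exact (param a b hab _).mpr ⟨sg e * cOf t, sOf t, hceq (sg e) t (hsgor e), rfl⟩
      · rw [matRed_mat, hgapp]
  rw [himg]
  have hginj : Function.Injective g := by
    rintro ⟨e, t⟩ ⟨e', t'⟩ hM
    rw [hgapp, hgapp] at hM
    have h10 : toZModPow n (sOf t) = toZModPow n (sOf t') := by
      have h := congr_fun (congr_fun hM 1) 0
      simpa only [Matrix.of_apply, Matrix.cons_val', Matrix.cons_val_zero,
        Matrix.cons_val_one, Matrix.head_cons, Matrix.empty_val',
        Matrix.cons_val_fin_one, Matrix.head_fin_const] using h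
    have h00 : toZModPow n (sg e * cOf t) = toZModPow n (sg e' * cOf t') := by
      have h := congr_fun (congr_fun hM 0) 0
      simpa only [Matrix.of_apply, Matrix.cons_val', Matrix.cons_val_zero,
        Matrix.cons_val_one, Matrix.head_cons, Matrix.empty_val',
        Matrix.cons_val_fin_one, Matrix.head_fin_const] using h
    clear hM
    have htt : t = t' := by rw [← hsOf t, ← hsOf t', h10]
    subst htt
    have hee : e = e' := by
      by_contra hne
      have hsgd : sg e - sg e' = 2 ∨ sg e - sg e' = -2 := by
        cases e <;> cases e'
        · exact absurd rfl hne
        · right; rw [hsgt, hsgf]; ring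
        · left; rw [hsgt, hsgf]; ring
        · exact absurd rfl hne
      have hdvd : ((p : ℤ_[p]) ^ n) ∣ (sg e - sg e') * cOf t := by
        have he : (sg e - sg e') * cOf t = sg e * cOf t - sg e' * cOf t := by ring
        rw [he, ← tz_eq_iff]
        exact h00
      have hdvd1 : (p : ℤ_[p]) ∣ 2 * cOf t := by
        have hp1 : (p : ℤ_[p]) ∣ (sg e - sg e') * cOf t :=
          dvd_trans (dvd_pow_self _ (by omega : n ≠ 0)) hdvd
        rcases hsgd with h2 | h2 <;> rw [h2] at hp1
        · exact hp1
        · have he : (-2 : ℤ_[p]) * cOf t = -(2 * cOf t) := by ring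
          rw [he] at hp1
          exact (dvd_neg).mp hp1
      have hlt : ‖(2 : ℤ_[p]) * cOf t‖ < 1 := (PadicInt.norm_lt_one_iff_dvd _).mpr hdvd1
      rw [norm_mul, norm_two_eq_one hp2, one_mul, hcnorm t] at hlt
      exact absurd hlt (lt_irrefl _)
    rw [hee]
  rw [← Nat.card_coe_set_eq, Nat.card_range_of_injective hginj, Nat.card_prod,
    Nat.card_eq_fintype_card, Nat.card_eq_fintype_card, ZMod.card, Fintype.card_bool]


end helpers

theorem stmt7 (p : ℕ) [Fact p.Prime] (hp2 : 2 < p)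
    (u : ℤ_[p]) (hu : ‖u‖ = 1) (husq : ¬ ∃ y : ℚ_[p], y ^ 2 = (u : ℚ_[p]))
    (v : ℤ_[p]) (hv3 : p % 4 = 3 → v = -1) (hv1 : p % 4 = 1 → v = -u) :
    ∀ a b : ℚ_[p],
      ((a, b) ∈ ({((1 : ℚ_[p]), (p : ℚ_[p])),
          ((u : ℚ_[p]), (p : ℚ_[p]))} : Set (ℚ_[p] × ℚ_[p]))) →
      ∀ n : ℕ, 1 ≤ n →
        (matRed p n 2 '' SO2set p a b).ncard = 2 * p ^ n := by
  intro a b hmem n hn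
  rcases hmem with h | h
  · have ha : a = 1 := congrArg Prod.fst h
    have hb : b = (p : ℚ_[p]) := congrArg Prod.snd h
    subst ha; subst hb
    have h1 : ((1 : ℤ_[p]) : ℚ_[p]) = (1 : ℚ_[p]) := by push_cast; rfl
    have := main_count hp2 (1 : ℤ_[p]) (1 : ℤ_[p]) (one_mul 1) n hn
    rwa [h1] at this
  · have ha : a = (u : ℚ_[p]) := congrArg Prod.fst h
    have hb : b = (p : ℚ_[p]) := congrArg Prod.snd h
    subst ha; subst hb
    obtain ⟨w, hw⟩ := (PadicInt.isUnit_iff.mpr hu).exists_right_inv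
    exact main_count hp2 u w hw n hn
end

section
/- For n ∈ ℕ, n ≥ 1, let G̃_{p^n} = {L̃ ∈ M₃(ℤ/p^nℤ) : L̃ᵀ·Ā₊·L̃ = Ā₊ and det L̃ = 1}, where Ā₊ is the entrywise reduction of A₊ = diag(1, -v, p) modulo p^n. Then for every L̃ ∈ G̃_{p^n}, the set of matrices M ∈ G̃_{p^{n+1}} whose entrywise reduction modulo p^n (via the ring homomorphism ℤ/p^{n+1}ℤ → ℤ/p^nℤ) equals L̃ has exactly p³ elements; in particular every solution modulo p^n of the defining special orthogonal conditions lifts to a solution modulo p^{n+1}. -/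
open scoped Matrix

/-- The group of solutions modulo `p^n` of the special orthogonal conditions associated
with the matrix `A` (with entries in `ℤ_p`). -/
noncomputable def SOmod (p : ℕ) [Fact p.Prime] (n d : ℕ)
    (A : Matrix (Fin d) (Fin d) ℚ_[p]) : Set (Matrix (Fin d) (Fin d) (ZMod (p ^ n))) :=
  {L | L.transpose * matRed p n d A * L = matRed p n d A ∧ L.det = 1}

section MatAux
variable {R : Type*} [CommRing R]

private lemma aux_conj (ε : R) (hε : ε * ε = 0) (A Y : Matrix (Fin 3) (Fin 3) R) :
    (1 + ε • Y)ᵀ * A * (1 + ε • Y) = A + ε • (Yᵀ * A + A * Y) := by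
  simp only [Matrix.transpose_add, Matrix.transpose_one, Matrix.transpose_smul,
    Matrix.add_mul, Matrix.mul_add, Matrix.one_mul, Matrix.mul_one, Matrix.smul_mul,
    Matrix.mul_smul, smul_smul, hε, zero_smul, smul_add]
  abel

private lemma aux_det_one_add_smul (ε : R) (hε : ε * ε = 0) (Y : Matrix (Fin 3) (Fin 3) R) :
    (1 + ε • Y).det = 1 + ε * (Y 0 0 + Y 1 1 + Y 2 2) := by
  simp only [Matrix.det_fin_three, Matrix.add_apply, Matrix.smul_apply, Matrix.one_apply,
    smul_eq_mul, Matrix.one_apply, Fin.isValue]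
  norm_num [Fin.ext_iff]
  linear_combination (Y 0 0 * Y 1 1 - Y 0 1 * Y 1 0 + Y 0 0 * Y 2 2 - Y 0 2 * Y 2 0
    + Y 1 1 * Y 2 2 - Y 1 2 * Y 2 1
    + ε * (Y 0 0 * Y 1 1 * Y 2 2 - Y 0 0 * Y 1 2 * Y 2 1 - Y 0 1 * Y 1 0 * Y 2 2
      + Y 0 1 * Y 1 2 * Y 2 0 + Y 0 2 * Y 1 0 * Y 2 1 - Y 0 2 * Y 1 1 * Y 2 0)) * hε

private lemma aux_det_pert (α β ε b00 b01 b02 b10 b11 b12 b20 b21 b22 : R)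
    (hε : ε * ε = 0) (hβ : ε * β = 0) :
    (!![1 + ε*b00, ε*b01, ε*b02; ε*b10, α + ε*b11, ε*b12; ε*b20, ε*b21, β + ε*b22]).det
      = α * β + ε * b22 * α := by
  simp only [Matrix.det_fin_three]
  simp [Matrix.cons_val]
  linear_combination (b11 + α*b00 + ε*(b00*b11 - b01*b10)) * hβ
    + (b11*b22 - b12*b21 + α*b00*b22 - α*b02*b20
      + ε*(b00*b11*b22 - b00*b12*b21 - b01*b10*b22 + b01*b12*b20 + b02*b10*b21 - b02*b11*b20)) * hε

private lemma aux_cancel {m : ℕ} (P : Matrix (Fin m) (Fin m) R) (hP : IsUnit P.det)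
    (U V : Matrix (Fin m) (Fin m) R) (h : Pᵀ * U * P = Pᵀ * V * P) : U = V := by
  have hPT : IsUnit Pᵀ.det := by rwa [Matrix.det_transpose]
  calc U = (Pᵀ⁻¹ * Pᵀ) * U * (P * P⁻¹) := by
        rw [Matrix.nonsing_inv_mul _ hPT, Matrix.mul_nonsing_inv _ hP, Matrix.one_mul,
          Matrix.mul_one]
    _ = Pᵀ⁻¹ * (Pᵀ * U * P) * P⁻¹ := by simp only [Matrix.mul_assoc]
    _ = Pᵀ⁻¹ * (Pᵀ * V * P) * P⁻¹ := by rw [h]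
    _ = (Pᵀ⁻¹ * Pᵀ) * V * (P * P⁻¹) := by simp only [Matrix.mul_assoc]
    _ = V := by
        rw [Matrix.nonsing_inv_mul _ hPT, Matrix.mul_nonsing_inv _ hP, Matrix.one_mul,
          Matrix.mul_one]

private lemma aux_t3 (a b c d e f g h i : R) :
    (!![a, b, c; d, e, f; g, h, i])ᵀ = !![a, d, g; b, e, h; c, f, i] := by
  ext i j; fin_cases i <;> fin_cases j <;> rfl

end MatAux

section ZModAux
variable (p n : ℕ) [hp : Fact p.Prime]

private lemma zmod_neZero : NeZero (p ^ (n + 1)) :=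
  ⟨pow_ne_zero _ hp.out.ne_zero⟩

private lemma zmod_eps_sq (hn : 1 ≤ n) :
    ((p : ZMod (p ^ (n + 1))) ^ n) * ((p : ZMod (p ^ (n + 1))) ^ n) = 0 := by
  have h : ((p : ZMod (p ^ (n + 1))) ^ n) * ((p : ZMod (p ^ (n + 1))) ^ n)
      = ((p ^ n * p ^ n : ℕ) : ZMod (p ^ (n + 1))) := by push_cast; ring
  rw [h, ZMod.natCast_eq_zero_iff]
  exact dvd_trans (pow_dvd_pow p (by omega : n + 1 ≤ n + n)) (dvd_of_eq (by rw [← pow_add]))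

private lemma zmod_eps_p :
    ((p : ZMod (p ^ (n + 1))) ^ n) * (p : ZMod (p ^ (n + 1))) = 0 := by
  have h : ((p : ZMod (p ^ (n + 1))) ^ n) * (p : ZMod (p ^ (n + 1)))
      = ((p ^ (n + 1) : ℕ) : ZMod (p ^ (n + 1))) := by push_cast; ring
  rw [h, ZMod.natCast_self]

private lemma zmod_ker (r : ZMod (p ^ (n + 1)))
    (h : ZMod.castHom (pow_dvd_pow p (Nat.le_succ n)) (ZMod (p ^ n)) r = 0) :
    ∃ k : ZMod (p ^ (n + 1)), r = ((p : ZMod (p ^ (n + 1))) ^ n) * k := by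
  haveI := zmod_neZero p n
  have h1 : r = ((r.val : ℕ) : ZMod (p ^ (n + 1))) := (ZMod.natCast_rightInverse r).symm
  have h2 : ((r.val : ℕ) : ZMod (p ^ n)) = 0 := by
    rw [h1] at h; rwa [map_natCast] at h
  obtain ⟨c, hc⟩ := (ZMod.natCast_eq_zero_iff _ _).mp h2
  refine ⟨(c : ZMod (p ^ (n + 1))), ?_⟩
  rw [h1, hc]; push_cast; ring

private lemma zmod_pi_eps (x : ZMod (p ^ (n + 1))) :
    ZMod.castHom (pow_dvd_pow p (Nat.le_succ n)) (ZMod (p ^ n))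
      (((p : ZMod (p ^ (n + 1))) ^ n) * x) = 0 := by
  rw [map_mul, map_pow, map_natCast]
  have h : ((p : ZMod (p ^ n)) ^ n) = ((p ^ n : ℕ) : ZMod (p ^ n)) := by push_cast; ring
  rw [h, ZMod.natCast_self, zero_mul]

private lemma zmod_eps_val (r : ZMod (p ^ (n + 1))) :
    ((p : ZMod (p ^ (n + 1))) ^ n) * r
      = ((p : ZMod (p ^ (n + 1))) ^ n)
        * ((((ZMod.castHom (dvd_pow_self p (Nat.succ_ne_zero n)) (ZMod p)) r).val
          : ℕ) : ZMod (p ^ (n + 1))) := by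
  haveI := zmod_neZero p n
  haveI : NeZero p := ⟨hp.out.ne_zero⟩
  have h1 : r = ((r.val : ℕ) : ZMod (p ^ (n + 1))) := (ZMod.natCast_rightInverse r).symm
  have h2 : ((ZMod.castHom (dvd_pow_self p (Nat.succ_ne_zero n)) (ZMod p)) r).val
      = r.val % p := by
    conv_lhs => rw [h1]
    rw [map_natCast, ZMod.val_natCast]
  rw [h2]
  have h3 : ((r.val : ℕ) : ZMod (p ^ (n + 1)))
      = (p : ZMod (p ^ (n + 1))) * ((r.val / p : ℕ) : ZMod (p ^ (n + 1)))
        + ((r.val % p : ℕ) : ZMod (p ^ (n + 1))) := by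
    conv_lhs => rw [← Nat.div_add_mod r.val p]
    push_cast; ring
  conv_lhs => rw [h1, h3]
  rw [mul_add, ← mul_assoc, zmod_eps_p, zero_mul, zero_add]

private lemma zmod_eps_inj (a b : ZMod p)
    (h : ((p : ZMod (p ^ (n + 1))) ^ n) * ((a.val : ℕ) : ZMod (p ^ (n + 1)))
      = ((p : ZMod (p ^ (n + 1))) ^ n) * ((b.val : ℕ) : ZMod (p ^ (n + 1)))) : a = b := by
  haveI : NeZero p := ⟨hp.out.ne_zero⟩
  have h1 : ((p ^ n * a.val : ℕ) : ZMod (p ^ (n + 1))) = ((p ^ n * b.val : ℕ) : ZMod (p ^ (n + 1))) := by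
    push_cast; push_cast at h; linear_combination h
  have h2 : (p ^ n * a.val) ≡ (p ^ n * b.val) [MOD p ^ (n + 1)] :=
    (ZMod.natCast_eq_natCast_iff _ _ _).mp h1
  have h3 : ((p : ℤ) ^ (n + 1)) ∣ ((p ^ n * b.val : ℕ) : ℤ) - ((p ^ n * a.val : ℕ) : ℤ) := by
    have := h2.dvd
    push_cast at this ⊢
    convert this using 2 <;> push_cast <;> ring
  have h4 : (p : ℤ) ∣ ((b.val : ℤ) - (a.val : ℤ)) := by
    have h5 : ((p : ℤ) ^ n) * (p : ℤ) ∣ ((p : ℤ) ^ n) * ((b.val : ℤ) - (a.val : ℤ)) := by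
      convert h3 using 1 <;> push_cast <;> ring
    exact (mul_dvd_mul_iff_left (pow_ne_zero n (by exact_mod_cast hp.out.ne_zero))).mp h5
  have h7 : (((b.val : ℤ) - (a.val : ℤ) : ℤ) : ZMod p) = 0 :=
    (ZMod.intCast_zmod_eq_zero_iff_dvd _ _).mpr h4
  have h8 : ((a.val : ℕ) : ZMod p) = ((b.val : ℕ) : ZMod p) := by
    push_cast at h7
    linear_combination -h7
  rwa [ZMod.natCast_rightInverse a, ZMod.natCast_rightInverse b] at h8

end ZModAux

section RedAux
variable (p : ℕ) [Fact p.Prime]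

private lemma redQ_zero (m : ℕ) : redQ p m 0 = 0 := by
  rw [redQ, dif_pos (by norm_num : ‖(0 : ℚ_[p])‖ ≤ 1)]
  have h : (⟨(0 : ℚ_[p]), by norm_num⟩ : ℤ_[p]) = (0 : ℤ_[p]) := Subtype.ext (by simp)
  rw [h, map_zero]

private lemma redQ_int (m : ℕ) (x : ℤ_[p]) :
    redQ p m (x : ℚ_[p]) = PadicInt.toZModPow m x := by
  rw [redQ, dif_pos x.2]
  congr 1

private lemma matRed_diag (m : ℕ) (v : ℤ_[p]) :
    matRed p m 3 (Matrix.diagonal ![(1 : ℚ_[p]), -(v : ℚ_[p]), (p : ℚ_[p])])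
      = Matrix.diagonal ![1, -(PadicInt.toZModPow m v), (p : ZMod (p ^ m))] := by
  rw [matRed, Matrix.diagonal_map (redQ_zero p m)]
  have hvec : (fun i => redQ p m (![(1 : ℚ_[p]), -(v : ℚ_[p]), (p : ℚ_[p])] i))
      = ![1, -(PadicInt.toZModPow m v), (p : ZMod (p ^ m))] := by
    funext i
    fin_cases i
    · show redQ p m ((1 : ℚ_[p])) = 1
      have h : ((1 : ℤ_[p]) : ℚ_[p]) = (1 : ℚ_[p]) := by simp
      rw [← h, redQ_int, map_one]
    · show redQ p m (-(v : ℚ_[p])) = -(PadicInt.toZModPow m v)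
      have h : ((-v : ℤ_[p]) : ℚ_[p]) = -(v : ℚ_[p]) := by simp
      rw [← h, redQ_int, map_neg]
    · show redQ p m ((p : ℚ_[p])) = (p : ZMod (p ^ m))
      have h : (((p : ℕ) : ℤ_[p]) : ℚ_[p]) = ((p : ℕ) : ℚ_[p]) := by push_cast; rfl
      rw [← h, redQ_int, map_natCast]
  rw [hvec]

private lemma matRed_succ (n d : ℕ) (A : Matrix (Fin d) (Fin d) ℚ_[p]) :
    (matRed p (n + 1) d A).map
        (ZMod.castHom (pow_dvd_pow p (Nat.le_succ n)) (ZMod (p ^ n))) = matRed p n d A := by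
  ext i j
  simp only [matRed, Matrix.map_apply, redQ]
  split
  · exact RingHom.congr_fun (PadicInt.zmod_cast_comp_toZModPow n (n + 1) (Nat.le_succ n)) _
  · simp

end RedAux

set_option maxHeartbeats 2000000 in
theorem stmt12 (p : ℕ) [Fact p.Prime] (hp2 : 2 < p)
    (u : ℤ_[p]) (hu : ‖u‖ = 1) (husq : ¬ ∃ y : ℚ_[p], y ^ 2 = (u : ℚ_[p]))
    (v : ℤ_[p]) (hv3 : p % 4 = 3 → v = -1) (hv1 : p % 4 = 1 → v = -u) :
    ∀ n : ℕ, 1 ≤ n →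
      ∀ L ∈ SOmod p n 3 (Matrix.diagonal ![(1 : ℚ_[p]), -(v : ℚ_[p]), (p : ℚ_[p])]),
        {M : Matrix (Fin 3) (Fin 3) (ZMod (p ^ (n + 1))) |
          M ∈ SOmod p (n + 1) 3 (Matrix.diagonal ![(1 : ℚ_[p]), -(v : ℚ_[p]), (p : ℚ_[p])]) ∧
          M.map (ZMod.castHom (pow_dvd_pow p (Nat.le_succ n)) (ZMod (p ^ n))) = L}.ncard
          = p ^ 3 := by
  intro n hn L hL
  obtain ⟨hL1, hL2⟩ := hL
  haveI hRne := zmod_neZero p n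
  haveI : NeZero p := ⟨(Fact.out : p.Prime).ne_zero⟩
  obtain ⟨ε, hεdef⟩ : ∃ e : ZMod (p ^ (n + 1)), e = (p : ZMod (p ^ (n + 1))) ^ n := ⟨_, rfl⟩
  obtain ⟨β, hβdef⟩ : ∃ b : ZMod (p ^ (n + 1)), b = (p : ZMod (p ^ (n + 1))) := ⟨_, rfl⟩
  obtain ⟨α, hαdef⟩ : ∃ a : ZMod (p ^ (n + 1)), a = -(PadicInt.toZModPow (n + 1) v) := ⟨_, rfl⟩
  have hε2 : ε * ε = 0 := by rw [hεdef]; exact zmod_eps_sq p n hn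
  have hεβ : ε * β = 0 := by rw [hεdef, hβdef]; exact zmod_eps_p p n
  have hker : ∀ r : ZMod (p ^ (n + 1)),
      ZMod.castHom (pow_dvd_pow p (Nat.le_succ n)) (ZMod (p ^ n)) r = 0 →
      ∃ c, r = ε * c := by
    intro r h; rw [hεdef]; exact zmod_ker p n r h
  have hπeps : ∀ x : ZMod (p ^ (n + 1)),
      ZMod.castHom (pow_dvd_pow p (Nat.le_succ n)) (ZMod (p ^ n)) (ε * x) = 0 := by
    intro x; rw [hεdef]; exact zmod_pi_eps p n x
  have heval : ∀ r : ZMod (p ^ (n + 1)),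
      ε * r = ε * ((((ZMod.castHom (dvd_pow_self p (Nat.succ_ne_zero n)) (ZMod p)) r).val
        : ℕ) : ZMod (p ^ (n + 1))) := by
    intro r; rw [hεdef]; exact zmod_eps_val p n r
  have hepsinj : ∀ a b : ZMod p,
      ε * ((a.val : ℕ) : ZMod (p ^ (n + 1))) = ε * ((b.val : ℕ) : ZMod (p ^ (n + 1))) →
      a = b := by
    intro a b h; refine zmod_eps_inj p n a b ?_; rw [← hεdef]; exact h
  -- the reduced Gram matrix at level n+1
  obtain ⟨A1, hA1def⟩ : ∃ X : Matrix (Fin 3) (Fin 3) (ZMod (p ^ (n + 1))),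
      X = Matrix.diagonal ![1, α, β] := ⟨_, rfl⟩
  have hA1 : matRed p (n + 1) 3
      (Matrix.diagonal ![(1 : ℚ_[p]), -(v : ℚ_[p]), (p : ℚ_[p])]) = A1 := by
    rw [hA1def, hαdef, hβdef]; exact matRed_diag p (n + 1) v
  have hA1T : A1ᵀ = A1 := by rw [hA1def, Matrix.diagonal_transpose]
  -- p is odd, 2 and α are invertible
  have hodd : p % 2 = 1 := Nat.odd_iff.mp ((Fact.out : p.Prime).odd_of_ne_two (by omega))
  have h2u : IsUnit (2 : ZMod (p ^ (n + 1))) := by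
    have h : ((2 : ℕ) : ZMod (p ^ (n + 1))) = (2 : ZMod (p ^ (n + 1))) := by push_cast; rfl
    rw [← h, ZMod.isUnit_iff_coprime]
    exact Nat.Coprime.pow_right _ ((Nat.coprime_primes Nat.prime_two Fact.out).mpr (by omega))
  obtain ⟨z, h2z⟩ := h2u.exists_right_inv
  have hvnorm : ‖v‖ = 1 := by
    have h4 : p % 4 = 1 ∨ p % 4 = 3 := by omega
    rcases h4 with h4 | h4
    · rw [hv1 h4, norm_neg, hu]
    · rw [hv3 h4, norm_neg, norm_one]
  have hαu : IsUnit α := by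
    rw [hαdef]
    exact ((PadicInt.isUnit_iff.mpr hvnorm).map (PadicInt.toZModPow (n + 1))).neg
  obtain ⟨a', haa'⟩ := hαu.exists_right_inv
  -- the chosen lift of L
  obtain ⟨Lh, hLhdef⟩ : ∃ X : Matrix (Fin 3) (Fin 3) (ZMod (p ^ (n + 1))),
      X = Matrix.of (fun i j => (((L i j).val : ℕ) : ZMod (p ^ (n + 1)))) := ⟨_, rfl⟩
  have hπL : Lh.map (⇑(ZMod.castHom (pow_dvd_pow p (Nat.le_succ n)) (ZMod (p ^ n)))) = L := by
    rw [hLhdef]; ext i j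
    show (ZMod.castHom (pow_dvd_pow p (Nat.le_succ n)) (ZMod (p ^ n)))
      (((L i j).val : ℕ) : ZMod (p ^ (n + 1))) = L i j
    rw [map_natCast]
    exact ZMod.natCast_rightInverse (L i j)
  have hπLh : ∀ i j, (ZMod.castHom (pow_dvd_pow p (Nat.le_succ n)) (ZMod (p ^ n)))
      (Lh i j) = L i j := fun i j => congrFun (congrFun hπL i) j
  -- determinant of the lift
  have hdetπ : (ZMod.castHom (pow_dvd_pow p (Nat.le_succ n)) (ZMod (p ^ n))) Lh.det = 1 := by
    rw [RingHom.map_det, RingHom.mapMatrix_apply, hπL, hL2]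
  obtain ⟨k, hk'⟩ := hker (Lh.det - 1) (by rw [map_sub, hdetπ, map_one, sub_self])
  have hk : Lh.det = 1 + ε * k := by linear_combination hk'
  have hdu : IsUnit Lh.det := by
    refine IsUnit.of_mul_eq_one (1 - ε * k) ?_
    rw [hk]; linear_combination (-(k * k)) * hε2
  obtain ⟨N, hNdef⟩ : ∃ X : Matrix (Fin 3) (Fin 3) (ZMod (p ^ (n + 1))), X = Lh⁻¹ := ⟨_, rfl⟩
  have hNL : N * Lh = 1 := by rw [hNdef]; exact Matrix.nonsing_inv_mul _ hdu
  have hLN : Lh * N = 1 := by rw [hNdef]; exact Matrix.mul_nonsing_inv _ hdu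
  -- the defect matrix
  obtain ⟨Δ, hΔdef⟩ : ∃ X : Matrix (Fin 3) (Fin 3) (ZMod (p ^ (n + 1))),
      X = Nᵀ * A1 * N - A1 := ⟨_, rfl⟩
  have hΔ1 : Lhᵀ * (A1 + Δ) * Lh = A1 := by
    have h1 : A1 + Δ = Nᵀ * A1 * N := by rw [hΔdef, add_sub_cancel]
    rw [h1]
    calc Lhᵀ * (Nᵀ * A1 * N) * Lh = (Lhᵀ * Nᵀ) * A1 * (N * Lh) := by
          simp only [Matrix.mul_assoc]
      _ = (N * Lh)ᵀ * A1 * (N * Lh) := by rw [Matrix.transpose_mul]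
      _ = A1 := by rw [hNL, Matrix.transpose_one, Matrix.one_mul, Matrix.mul_one]
  have hπA1 : A1.map (⇑(ZMod.castHom (pow_dvd_pow p (Nat.le_succ n)) (ZMod (p ^ n))))
      = matRed p n 3 (Matrix.diagonal ![(1 : ℚ_[p]), -(v : ℚ_[p]), (p : ℚ_[p])]) := by
    rw [← hA1]; exact matRed_succ p n 3 _
  have hπΔ : Δ.map (⇑(ZMod.castHom (pow_dvd_pow p (Nat.le_succ n)) (ZMod (p ^ n)))) = 0 := by
    have hLu : IsUnit L.det := by rw [hL2]; exact isUnit_one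
    have h2 := congrArg (fun X : Matrix (Fin 3) (Fin 3) (ZMod (p ^ (n + 1))) =>
      X.map (⇑(ZMod.castHom (pow_dvd_pow p (Nat.le_succ n)) (ZMod (p ^ n))))) hΔ1
    simp only [Matrix.map_mul, Matrix.transpose_map, hπL] at h2
    rw [Matrix.map_add _ (fun a b => map_add _ a b) A1 Δ, hπA1] at h2
    have h1 : Lᵀ * (matRed p n 3 (Matrix.diagonal ![(1 : ℚ_[p]), -(v : ℚ_[p]), (p : ℚ_[p])])
        + Δ.map (⇑(ZMod.castHom (pow_dvd_pow p (Nat.le_succ n)) (ZMod (p ^ n))))) * L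
        = Lᵀ * (matRed p n 3 (Matrix.diagonal ![(1 : ℚ_[p]), -(v : ℚ_[p]), (p : ℚ_[p])])
        + 0) * L := by
      rw [add_zero, hL1]; exact h2
    have h3 := aux_cancel L hLu _ _ h1
    exact add_left_cancel h3
  have hBex : ∀ i j, ∃ c, Δ i j = ε * c := by
    intro i j
    exact hker _ (congrFun (congrFun hπΔ i) j)
  obtain ⟨Bm, hB⟩ : ∃ X : Matrix (Fin 3) (Fin 3) (ZMod (p ^ (n + 1))),
      ∀ i j, Δ i j = ε * X i j :=
    ⟨Matrix.of (fun i j => (hBex i j).choose), fun i j => (hBex i j).choose_spec⟩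
  have hΔT : Δᵀ = Δ := by
    rw [hΔdef, Matrix.transpose_sub, Matrix.transpose_mul, Matrix.transpose_mul,
      Matrix.transpose_transpose, hA1T]
    simp only [Matrix.mul_assoc]
  have hΔsym : ∀ i j, Δ j i = Δ i j := by
    intro i j
    conv_lhs => rw [show Δ j i = Δᵀ i j from rfl, hΔT]
  -- the key solvability fact: Δ 2 2 = 0
  have hΔ22 : Δ 2 2 = 0 := by
    have hA1Δ : A1 + Δ = !![1 + ε * Bm 0 0, ε * Bm 0 1, ε * Bm 0 2;
        ε * Bm 1 0, α + ε * Bm 1 1, ε * Bm 1 2;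
        ε * Bm 2 0, ε * Bm 2 1, β + ε * Bm 2 2] := by
      ext i j
      rw [Matrix.add_apply, hA1def]
      fin_cases i <;> fin_cases j <;> simp [Matrix.diagonal_apply] <;>
        first
          | linear_combination hB 0 0
          | linear_combination hB 0 1
          | linear_combination hB 0 2
          | linear_combination hB 1 0
          | linear_combination hB 1 1
          | linear_combination hB 1 2
          | linear_combination hB 2 0
          | linear_combination hB 2 1
          | linear_combination hB 2 2
    have hdet1 : Lh.det * (A1 + Δ).det * Lh.det = A1.det := by
      have h := congrArg Matrix.det hΔ1
      rwa [Matrix.det_mul, Matrix.det_mul, Matrix.det_transpose] at h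
    have hdetA1 : A1.det = α * β := by
      rw [hA1def, Matrix.det_diagonal, Fin.prod_univ_three]
      simp
    have hdetpert : (A1 + Δ).det = α * β + ε * Bm 2 2 * α := by
      rw [hA1Δ]
      exact aux_det_pert α β ε _ _ _ _ _ _ _ _ _ hε2 hεβ
    have hsc : Lh.det * (α * β + ε * Bm 2 2 * α) * Lh.det = α * β := by
      rw [← hdetpert, ← hdetA1]; exact hdet1
    rw [hk] at hsc
    have hsc2 : ε * Bm 2 2 * α = 0 := by
      linear_combination hsc - (2 * k * α) * hεβ
        - (2 * k * Bm 2 2 * α + k * k * α * β + ε * k * k * Bm 2 2 * α) * hε2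
    rw [hB 2 2]
    linear_combination a' * hsc2 - (ε * Bm 2 2) * haa'
  -- the parametrizing family
  obtain ⟨Yf, hYfdef⟩ : ∃ X : ZMod p → ZMod p → ZMod p →
      Matrix (Fin 3) (Fin 3) (ZMod (p ^ (n + 1))),
      X = fun s t w =>
        !![z * Bm 0 0, Bm 0 1 - α * ((s.val : ℕ) : ZMod (p ^ (n + 1))), Bm 0 2;
           ((s.val : ℕ) : ZMod (p ^ (n + 1))), z * a' * Bm 1 1, a' * Bm 1 2;
           ((t.val : ℕ) : ZMod (p ^ (n + 1))), ((w.val : ℕ) : ZMod (p ^ (n + 1))),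
             -k - z * Bm 0 0 - z * a' * Bm 1 1] := ⟨_, rfl⟩
  obtain ⟨g, hgdef⟩ : ∃ X : ZMod p × ZMod p × ZMod p →
      Matrix (Fin 3) (Fin 3) (ZMod (p ^ (n + 1))),
      X = fun stw => (1 + ε • Yf stw.1 stw.2.1 stw.2.2) * Lh := ⟨_, rfl⟩
  -- the family satisfies the linearized equation
  have hYfkey : ∀ s t w : ZMod p, ε • ((Yf s t w)ᵀ * A1 + A1 * (Yf s t w)) = Δ := by
    intro s t w
    rw [hA1def]
    simp only [hYfdef]
    rw [aux_t3]
    ext i j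
    fin_cases i <;> fin_cases j <;>
      simp [Matrix.mul_diagonal, Matrix.diagonal_mul, Matrix.vecMul_diagonal, smul_eq_mul,
        -ZMod.natCast_val]
    · linear_combination (ε * Bm 0 0) * h2z - hB 0 0
    · linear_combination - hB 0 1
    · linear_combination ((t.val : ℕ) : ZMod (p ^ (n + 1))) * hεβ - hB 0 2
    · linear_combination - hΔsym 0 1 - hB 0 1
    · linear_combination (ε * Bm 1 1 * a' * α) * h2z + (ε * Bm 1 1) * haa' - hB 1 1
    · linear_combination ((w.val : ℕ) : ZMod (p ^ (n + 1))) * hεβ + (ε * Bm 1 2) * haa' - hB 1 2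
    · linear_combination ((t.val : ℕ) : ZMod (p ^ (n + 1))) * hεβ - hΔsym 0 2 - hB 0 2
    · linear_combination ((w.val : ℕ) : ZMod (p ^ (n + 1))) * hεβ + (ε * Bm 1 2) * haa'
        - hΔsym 1 2 - hB 1 2
    · linear_combination (2 * (-k - z * Bm 0 0 - z * a' * Bm 1 1)) * hεβ - hΔ22
  -- forward conditions
  have hc1 : ∀ s t w : ZMod p,
      ((1 + ε • Yf s t w) * Lh)ᵀ * A1 * ((1 + ε • Yf s t w) * Lh) = A1 := by
    intro s t w
    calc ((1 + ε • Yf s t w) * Lh)ᵀ * A1 * ((1 + ε • Yf s t w) * Lh)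
        = Lhᵀ * ((1 + ε • Yf s t w)ᵀ * A1 * (1 + ε • Yf s t w)) * Lh := by
          rw [Matrix.transpose_mul]; simp only [Matrix.mul_assoc]
      _ = Lhᵀ * (A1 + Δ) * Lh := by rw [aux_conj ε hε2 A1 (Yf s t w), hYfkey s t w]
      _ = A1 := hΔ1
  have hdetY : ∀ s t w : ZMod p, (1 + ε • Yf s t w).det = 1 - ε * k := by
    intro s t w
    rw [aux_det_one_add_smul ε hε2]
    simp [hYfdef, -ZMod.natCast_val]
    ring
  have hc2 : ∀ s t w : ZMod p, ((1 + ε • Yf s t w) * Lh).det = 1 := by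
    intro s t w
    rw [Matrix.det_mul, hdetY s t w, hk]
    linear_combination (-(k * k)) * hε2
  have hc3 : ∀ s t w : ZMod p, ((1 + ε • Yf s t w) * Lh).map
      (⇑(ZMod.castHom (pow_dvd_pow p (Nat.le_succ n)) (ZMod (p ^ n)))) = L := by
    intro s t w
    have hMeq : (1 + ε • Yf s t w) * Lh = Lh + ε • (Yf s t w * Lh) := by
      rw [Matrix.add_mul, Matrix.one_mul, Matrix.smul_mul]
    rw [hMeq]
    ext i j
    show (ZMod.castHom (pow_dvd_pow p (Nat.le_succ n)) (ZMod (p ^ n)))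
      ((Lh + ε • (Yf s t w * Lh)) i j) = L i j
    rw [Matrix.add_apply, Matrix.smul_apply, smul_eq_mul, map_add, hπeps, add_zero]
    exact hπLh i j
  -- the set is the range of g
  have hTg : {M : Matrix (Fin 3) (Fin 3) (ZMod (p ^ (n + 1))) |
      M ∈ SOmod p (n + 1) 3 (Matrix.diagonal ![(1 : ℚ_[p]), -(v : ℚ_[p]), (p : ℚ_[p])]) ∧
      M.map (ZMod.castHom (pow_dvd_pow p (Nat.le_succ n)) (ZMod (p ^ n))) = L}
      = Set.range g := by
    ext M
    simp only [Set.mem_setOf_eq, SOmod, Set.mem_range, hA1]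
    constructor
    · rintro ⟨⟨hM1, hM2⟩, hM3⟩
      have hEex : ∀ i j, ∃ c, (M - Lh) i j = ε * c := by
        intro i j
        refine hker _ ?_
        rw [Matrix.sub_apply, map_sub]
        rw [show (ZMod.castHom (pow_dvd_pow p (Nat.le_succ n)) (ZMod (p ^ n))) (M i j) = L i j
          from congrFun (congrFun hM3 i) j, hπLh i j, sub_self]
      obtain ⟨X, hX⟩ : ∃ X : Matrix (Fin 3) (Fin 3) (ZMod (p ^ (n + 1))),
          ∀ i j, (M - Lh) i j = ε * X i j :=
        ⟨Matrix.of (fun i j => (hEex i j).choose), fun i j => (hEex i j).choose_spec⟩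
      have hMX : M = Lh + ε • X := by
        ext i j
        rw [Matrix.add_apply, Matrix.smul_apply, smul_eq_mul]
        have h := hX i j
        rw [Matrix.sub_apply] at h
        linear_combination h
      obtain ⟨Y, hYdef⟩ : ∃ Y, Y = X * N := ⟨_, rfl⟩
      have hMY : M = (1 + ε • Y) * Lh := by
        rw [hYdef, Matrix.add_mul, Matrix.one_mul, Matrix.smul_mul, Matrix.mul_assoc, hNL,
          Matrix.mul_one, ← hMX]
      have hconj : (1 + ε • Y)ᵀ * A1 * (1 + ε • Y) = A1 + Δ := by
        refine aux_cancel Lh hdu _ _ ?_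
        calc Lhᵀ * ((1 + ε • Y)ᵀ * A1 * (1 + ε • Y)) * Lh = Mᵀ * A1 * M := by
              rw [hMY, Matrix.transpose_mul]; simp only [Matrix.mul_assoc]
          _ = A1 := hM1
          _ = Lhᵀ * (A1 + Δ) * Lh := hΔ1.symm
      have hYeq : ε • (Yᵀ * A1 + A1 * Y) = Δ := by
        have h1 := aux_conj ε hε2 A1 Y
        rw [h1] at hconj
        exact add_left_cancel hconj
      rw [hA1def] at hYeq
      have e00 := congrFun (congrFun hYeq 0) 0
      have e01 := congrFun (congrFun hYeq 0) 1
      have e02 := congrFun (congrFun hYeq 0) 2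
      have e11 := congrFun (congrFun hYeq 1) 1
      have e12 := congrFun (congrFun hYeq 1) 2
      simp only [Matrix.smul_apply, Matrix.add_apply, Matrix.mul_diagonal, Matrix.diagonal_mul,
        Matrix.transpose_apply, smul_eq_mul, Matrix.cons_val_zero, Matrix.cons_val_one,
        Matrix.head_cons, Matrix.cons_val_two, Matrix.tail_cons, one_mul, mul_one]
        at e00 e01 e02 e11 e12
      have hdet2 : (1 + ε * (Y 0 0 + Y 1 1 + Y 2 2)) * Lh.det = 1 := by
        rw [← aux_det_one_add_smul ε hε2 Y, ← Matrix.det_mul, ← hMY]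
        exact hM2
      rw [hk] at hdet2
      have htr : ε * (Y 0 0 + Y 1 1 + Y 2 2) = -(ε * k) := by
        linear_combination hdet2 - ((Y 0 0 + Y 1 1 + Y 2 2) * k) * hε2
      have hs := heval (Y 1 0)
      have ht := heval (Y 2 0)
      have hw := heval (Y 2 1)
      refine ⟨(ZMod.castHom (dvd_pow_self p (Nat.succ_ne_zero n)) (ZMod p) (Y 1 0),
        ZMod.castHom (dvd_pow_self p (Nat.succ_ne_zero n)) (ZMod p) (Y 2 0),
        ZMod.castHom (dvd_pow_self p (Nat.succ_ne_zero n)) (ZMod p) (Y 2 1)), ?_⟩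
      simp only [hgdef]
      rw [hMY]
      have hsY : ε • Yf (ZMod.castHom (dvd_pow_self p (Nat.succ_ne_zero n)) (ZMod p) (Y 1 0))
          (ZMod.castHom (dvd_pow_self p (Nat.succ_ne_zero n)) (ZMod p) (Y 2 0))
          (ZMod.castHom (dvd_pow_self p (Nat.succ_ne_zero n)) (ZMod p) (Y 2 1)) = ε • Y := by
        simp only [hYfdef]
        ext i j
        fin_cases i <;> fin_cases j <;> simp [smul_eq_mul, -ZMod.natCast_val, -ZMod.castHom_apply]
        · linear_combination - z * e00 - z * hB 0 0 + (ε * Y 0 0) * h2z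
        · linear_combination - e01 - hB 0 1 + α * hs
        · linear_combination - e02 - hB 0 2 + (Y 2 0) * hεβ
        · linear_combination - hs
        · linear_combination - z * a' * e11 - z * a' * hB 1 1 + (ε * Y 1 1 * a' * α) * h2z
            + (ε * Y 1 1) * haa'
        · linear_combination - a' * e12 - a' * hB 1 2 + (a' * Y 2 1) * hεβ + (ε * Y 1 2) * haa'
        · linear_combination - ht
        · linear_combination - hw
        · linear_combination - htr + z * e00 + z * hB 0 0 - (ε * Y 0 0) * h2z
            + z * a' * e11 + z * a' * hB 1 1 - (ε * Y 1 1 * a' * α) * h2z - (ε * Y 1 1) * haa'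
      rw [hsY]
    · rintro ⟨⟨s, t, w⟩, rfl⟩
      simp only [hgdef]
      exact ⟨⟨hc1 s t w, hc2 s t w⟩, hc3 s t w⟩
  -- conclusion by counting
  have hginj : Function.Injective g := by
    rintro ⟨s1, t1, w1⟩ ⟨s2, t2, w2⟩ hab
    simp only [hgdef] at hab
    have h1 : (1 : Matrix (Fin 3) (Fin 3) (ZMod (p ^ (n + 1)))) + ε • Yf s1 t1 w1
        = 1 + ε • Yf s2 t2 w2 := by
      have h := congrArg (fun X => X * N) hab
      simpa only [Matrix.mul_assoc, hLN, Matrix.mul_one] using h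
    have h2 : ε • Yf s1 t1 w1 = ε • Yf s2 t2 w2 := add_left_cancel h1
    simp only [hYfdef] at h2
    have hi1 := congrFun (congrFun h2 1) 0
    have hi2 := congrFun (congrFun h2 2) 0
    have hi3 := congrFun (congrFun h2 2) 1
    simp only [Matrix.smul_apply, smul_eq_mul, Matrix.cons_val_zero, Matrix.cons_val_one,
      Matrix.head_cons, Matrix.cons_val_two, Matrix.tail_cons, Matrix.of_apply,
      Matrix.cons_val', Matrix.empty_val', Matrix.cons_val_fin_one, Matrix.head_fin_const]
      at hi1 hi2 hi3
    have hs := hepsinj s1 s2 hi1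
    have ht := hepsinj t1 t2 hi2
    have hw := hepsinj w1 w2 hi3
    simp [Prod.ext_iff, hs, ht, hw]
  rw [hTg, ← Nat.card_coe_set_eq, Nat.card_range_of_injective hginj, Nat.card_prod,
    Nat.card_prod, Nat.card_zmod]
  ring
end
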